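/- Let β ≥ 1, let C be a finite set with |C| = m ≥ 2, let μ be a Borel probability measure on the cube [0,1]^C (a utility vector u = (u_j)_{j∈C}), and let W, B ∈ C be two distinct elements. Suppose (i) ∑_{j ∈ C \ {W}} ∫ σ_β(u_W − u_j) dμ ≥ ∑_{j ∈ C \ {B}} ∫ σ_β(u_B − u_j) dμ, and (ii) ∑_{j ∈ C \ {W}} ∫ σ_β(u_W − u_j) dμ ≥ (m − 1)/2. Then ∫ u_B dμ ≤ β · (1 + exp(−β))/(1 − exp(−β)) · ∫ u_W dμ. -/

import Mathlib

open MeasureTheory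

noncomputable def sigma (β t : ℝ) : ℝ := 1 / (1 + Real.exp (-(β * t)))

lemma sigma_pos (β t : ℝ) : 0 < sigma β t := by
  unfold sigma; positivity

lemma sigma_le_one (β t : ℝ) : sigma β t ≤ 1 := by
  unfold sigma
  rw [div_le_one (by positivity)]
  linarith [Real.exp_pos (-(β * t))]

lemma sigma_zero (β : ℝ) : sigma β 0 = 1/2 := by
  simp [sigma]
  norm_num

lemma sigma_neg (β t : ℝ) : sigma β (-t) = 1 - sigma β t := by
  unfold sigma
  rw [mul_neg, neg_neg]
  have h1 : Real.exp (β * t) = (Real.exp (-(β * t)))⁻¹ := by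
    rw [← Real.exp_neg, neg_neg]
  rw [h1]
  have h2 : Real.exp (-(β * t)) > 0 := Real.exp_pos _
  field_simp
  ring

lemma sigma_mono (β : ℝ) (hβ : 0 ≤ β) {t s : ℝ} (hts : t ≤ s) :
    sigma β t ≤ sigma β s := by
  unfold sigma
  have h1 : Real.exp (-(β * s)) ≤ Real.exp (-(β * t)) := by
    apply Real.exp_le_exp.2
    nlinarith
  have h2 : 0 < 1 + Real.exp (-(β * s)) := by positivity
  exact one_div_le_one_div_of_le h2 (by linarith)

lemma sigma_hasDerivAt (β x : ℝ) :
    HasDerivAt (sigma β)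
      (β * Real.exp (-(β * x)) / (1 + Real.exp (-(β * x)))^2) x := by
  have h1 : HasDerivAt (fun y : ℝ => -(β * y)) (-β) x := by
    have h := ((hasDerivAt_id x).const_mul β).neg
    simp only [mul_one] at h
    exact h
  have h2 : HasDerivAt (fun y : ℝ => Real.exp (-(β * y)))
      (Real.exp (-(β * x)) * (-β)) x := h1.exp
  have h3 : HasDerivAt (fun y : ℝ => 1 + Real.exp (-(β * y)))
      (Real.exp (-(β * x)) * (-β)) x := h2.const_add 1
  have h4 : (1 + Real.exp (-(β * x))) ≠ 0 := by positivity
  have h5 := h3.inv h4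
  have h6 : sigma β = fun y : ℝ => (1 + Real.exp (-(β * y)))⁻¹ := by
    funext y; simp [sigma, one_div]
  rw [h6]
  refine h5.congr_deriv ?_
  ring

lemma sigma_diff (β : ℝ) : Differentiable ℝ (sigma β) :=
  fun x => (sigma_hasDerivAt β x).differentiableAt

lemma sigma_lip (β : ℝ) (hβ : 0 ≤ β) {t d : ℝ} (hd : 0 ≤ d) :
    sigma β (t + d) ≤ sigma β t + β/4 * d := by
  have hbound : ∀ x : ℝ, deriv (sigma β) x ≤ β/4 := by
    intro x
    rw [(sigma_hasDerivAt β x).deriv]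
    have hE : 0 < Real.exp (-(β * x)) := Real.exp_pos _
    rw [div_le_iff₀ (by positivity)]
    nlinarith [mul_nonneg hβ (sq_nonneg (1 - Real.exp (-(β * x))))]
  have := image_sub_le_mul_sub_of_deriv_le (sigma_diff β) hbound
    (show t ≤ t + d by linarith)
  have h2 : t + d - t = d := by ring
  rw [h2] at this
  linarith

lemma sigma_concaveOn (β : ℝ) (hβ : 0 < β) :
    ConcaveOn ℝ (Set.Icc (0:ℝ) 1) (sigma β) := by
  apply AntitoneOn.concaveOn_of_deriv (convex_Icc 0 1)
  · exact (sigma_diff β).continuous.continuousOn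
  · exact fun x _ => ((sigma_hasDerivAt β x).differentiableAt).differentiableWithinAt
  · rw [interior_Icc]
    intro x hx y hy hxy
    rw [(sigma_hasDerivAt β x).deriv, (sigma_hasDerivAt β y).deriv]
    set A := Real.exp (-(β * x)) with hA
    set Bb := Real.exp (-(β * y)) with hB
    have hA0 : 0 < A := Real.exp_pos _
    have hB0 : 0 < Bb := Real.exp_pos _
    have hA1 : A ≤ 1 := by
      rw [hA]
      apply Real.exp_le_one_iff.2
      nlinarith [hx.1]
    have hBA : Bb ≤ A := by
      rw [hA, hB]
      apply Real.exp_le_exp.2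
      nlinarith
    have hAB1 : A * Bb ≤ 1 := by
      nlinarith [mul_le_mul hA1 (hBA.trans hA1) hB0.le zero_le_one]
    rw [div_le_div_iff₀ (by positivity) (by positivity)]
    nlinarith [mul_nonneg (mul_nonneg hβ.le (sub_nonneg.2 hBA)) (sub_nonneg.2 hAB1)]

lemma sigma_chord (β : ℝ) (hβ : 0 < β) {t : ℝ} (ht0 : 0 ≤ t) (ht1 : t ≤ 1) :
    t * (sigma β 1 - 1/2) ≤ sigma β t - 1/2 := by
  have hc := (sigma_concaveOn β hβ).2 (Set.mem_Icc.2 ⟨zero_le_one, le_refl (1:ℝ)⟩)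
    (Set.mem_Icc.2 ⟨le_refl (0:ℝ), zero_le_one⟩) ht0 (by linarith : (0:ℝ) ≤ 1 - t)
    (by ring)
  simp only [smul_eq_mul, mul_one, mul_zero, add_zero] at hc
  rw [sigma_zero] at hc
  linarith

lemma sigma_half_le (β : ℝ) (hβ : 0 ≤ β) {t : ℝ} (ht : 0 ≤ t) : 1/2 ≤ sigma β t := by
  have := sigma_mono β hβ ht
  rw [sigma_zero] at this
  exact this

lemma g1_le (β : ℝ) (hβ : 0 ≤ β) : sigma β 1 - 1/2 ≤ β/4 := by
  have := sigma_lip β hβ (t := 0) (d := 1) zero_le_one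
  rw [zero_add, sigma_zero] at this
  linarith

/-- Main pointwise inequality for "middle" candidates. -/
lemma P1 (β : ℝ) (hβ : 1 ≤ β) {x y s : ℝ}
    (hx : x ∈ Set.Icc (0:ℝ) 1) (hy : y ∈ Set.Icc (0:ℝ) 1) (hs : s ∈ Set.Icc (0:ℝ) 1) :
    2 * sigma β (x - s) - sigma β (y - s) ≤ 1/2 + β/2 * x - (sigma β 1 - 1/2) * y := by
  obtain ⟨hx0, hx1⟩ := hx
  obtain ⟨hy0, hy1⟩ := hy
  obtain ⟨hs0, hs1⟩ := hs
  have hβ0 : 0 < β := by linarith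
  have hg1_0 : 0 ≤ sigma β 1 - 1/2 := by linarith [sigma_half_le β hβ0.le zero_le_one]
  have lip : sigma β (x - s) ≤ sigma β (-s) + β/4 * x := by
    have h := sigma_lip β hβ0.le (t := -s) (d := x) hx0
    rw [neg_add_eq_sub] at h
    exact h
  have hneg_s : sigma β (-s) = 1 - sigma β s := sigma_neg β s
  have hchordS : s * (sigma β 1 - 1/2) ≤ sigma β s - 1/2 := sigma_chord β hβ0 hs0 hs1
  have hx_half : β/4 * x ≤ β/2 * x := by nlinarith
  rcases le_or_gt y s with hys | hys
  · have e1 : sigma β (y - s) = 1 - sigma β (s - y) := by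
      rw [show y - s = -(s - y) by ring, sigma_neg]
    have e2 : sigma β (s - y) ≤ sigma β s := sigma_mono β hβ0.le (by linarith)
    have e3 : y * (sigma β 1 - 1/2) ≤ s * (sigma β 1 - 1/2) :=
      mul_le_mul_of_nonneg_right hys hg1_0
    linarith
  · have e1 : (y - s) * (sigma β 1 - 1/2) ≤ sigma β (y - s) - 1/2 :=
      sigma_chord β hβ0 (by linarith) (by linarith)
    have e2 : 1/2 ≤ sigma β s := sigma_half_le β hβ0.le hs0
    linarith

/-- Pointwise inequality for the W-B pair term. -/
lemma P2 (β : ℝ) (hβ : 1 ≤ β) {x y : ℝ}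
    (hx : x ∈ Set.Icc (0:ℝ) 1) (hy : y ∈ Set.Icc (0:ℝ) 1) :
    sigma β (x - y) ≤ 1/2 + β/2 * x - (sigma β 1 - 1/2) * y := by
  obtain ⟨hx0, hx1⟩ := hx
  obtain ⟨hy0, hy1⟩ := hy
  have hβ0 : 0 < β := by linarith
  have hg1_4 : sigma β 1 - 1/2 ≤ β/4 := g1_le β hβ0.le
  have hx_half : β/4 * x ≤ β/2 * x := by nlinarith
  rcases le_or_gt y x with hyx | hyx
  · have h := sigma_lip β hβ0.le (t := 0) (d := x - y) (by linarith)
    rw [zero_add, sigma_zero] at h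
    have e1 : (sigma β 1 - 1/2) * y ≤ β/4 * y := mul_le_mul_of_nonneg_right hg1_4 hy0
    linarith
  · have e0 : sigma β (x - y) = 1 - sigma β (y - x) := by
      rw [show x - y = -(y - x) by ring, sigma_neg]
    have e1 : (y - x) * (sigma β 1 - 1/2) ≤ sigma β (y - x) - 1/2 :=
      sigma_chord β hβ0 (by linarith) (by linarith)
    have e2 : x * (sigma β 1 - 1/2) ≤ x * (β/2) := by
      apply mul_le_mul_of_nonneg_left _ hx0
      linarith
    linarith

theorem borda_upper_bound {C : Type*} [Fintype C] [DecidableEq C] (β : ℝ) (hβ : 1 ≤ β)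
    (m : ℕ) (hm : m = Fintype.card C) (hm2 : 2 ≤ m)
    (μ : Measure (C → ℝ)) [IsProbabilityMeasure μ]
    (hsupp : ∀ᵐ u ∂μ, ∀ j, u j ∈ Set.Icc (0:ℝ) 1)
    (W B : C) (hWB : W ≠ B)
    (h1 : ∑ j ∈ Finset.univ.erase W, (∫ u, sigma β (u W - u j) ∂μ)
        ≥ ∑ j ∈ Finset.univ.erase B, (∫ u, sigma β (u B - u j) ∂μ))
    (h2 : ∑ j ∈ Finset.univ.erase W, (∫ u, sigma β (u W - u j) ∂μ)
        ≥ ((m : ℝ) - 1) / 2) :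
    (∫ u, u B ∂μ) ≤ β * ((1 + Real.exp (-β)) / (1 - Real.exp (-β))) * (∫ u, u W ∂μ) := by
  have hβ0 : 0 < β := by linarith
  have hEpos : 0 < Real.exp (-β) := Real.exp_pos _
  have hElt : Real.exp (-β) < 1 := Real.exp_lt_one_iff.2 (by linarith)
  have hg1val : sigma β 1 - 1/2
      = (1 - Real.exp (-β)) / (2 * (1 + Real.exp (-β))) := by
    unfold sigma
    rw [mul_one]
    have h : (1 + Real.exp (-β)) ≠ 0 := by positivity
    field_simp
    ring
  -- continuity / measurability / integrability
  have hcont : Continuous (sigma β) := by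
    unfold sigma
    apply Continuous.div continuous_const
    · exact continuous_const.add (Real.continuous_exp.comp
        ((continuous_const.mul continuous_id).neg))
    · intro t; positivity
  have hmeasj : ∀ c j : C, Measurable fun u : C → ℝ => sigma β (u c - u j) :=
    fun c j => hcont.measurable.comp ((measurable_pi_apply c).sub (measurable_pi_apply j))
  have hint : ∀ c j : C, Integrable (fun u : C → ℝ => sigma β (u c - u j)) μ := by
    intro c j
    apply Integrable.mono' (integrable_const (1:ℝ)) (hmeasj c j).aestronglyMeasurable
    filter_upwards with u
    rw [Real.norm_eq_abs, abs_le]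
    exact ⟨by linarith [sigma_pos β (u c - u j)], sigma_le_one β (u c - u j)⟩
  have hintW : Integrable (fun u : C → ℝ => u W) μ := by
    apply Integrable.mono' (integrable_const (1:ℝ)) (measurable_pi_apply W).aestronglyMeasurable
    filter_upwards [hsupp] with u hu
    rw [Real.norm_eq_abs, abs_le]
    exact ⟨by linarith [(hu W).1], (hu W).2⟩
  have hintB : Integrable (fun u : C → ℝ => u B) μ := by
    apply Integrable.mono' (integrable_const (1:ℝ)) (measurable_pi_apply B).aestronglyMeasurable
    filter_upwards [hsupp] with u hu
    rw [Real.norm_eq_abs, abs_le]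
    exact ⟨by linarith [(hu B).1], (hu B).2⟩
  set g1 : ℝ := sigma β 1 - 1/2 with hg1def
  set a : ℝ := ∫ u, u W ∂μ with ha
  set b : ℝ := ∫ u, u B ∂μ with hb
  -- value of the RHS integral
  have hintC : Integrable (fun _ : C → ℝ => (1:ℝ)/2) μ := integrable_const _
  have hintW2 : Integrable (fun u : C → ℝ => β/2 * u W) μ := hintW.const_mul _
  have hintB2 : Integrable (fun u : C → ℝ => g1 * u B) μ := hintB.const_mul _
  have hintA : Integrable (fun u : C → ℝ => 1/2 + β/2 * u W) μ := hintC.add hintW2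
  have hRHS : ∫ u, (1/2 + β/2 * u W - g1 * u B) ∂μ = 1/2 + β/2 * a - g1 * b := by
    rw [integral_sub hintA hintB2, integral_add hintC hintW2, integral_const_mul,
      integral_const_mul, integral_const]
    simp [measure_univ]
    rfl
  have hintRHS : Integrable (fun u : C → ℝ => 1/2 + β/2 * u W - g1 * u B) μ :=
    hintA.sub hintB2
  -- per-candidate bound for middle candidates
  have hmid : ∀ j : C, 2 * (∫ u, sigma β (u W - u j) ∂μ) - (∫ u, sigma β (u B - u j) ∂μ)
      ≤ 1/2 + β/2 * a - g1 * b := by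
    intro j
    have hI : ∫ u, (2 * sigma β (u W - u j) - sigma β (u B - u j)) ∂μ
        ≤ ∫ u, (1/2 + β/2 * u W - g1 * u B) ∂μ := by
      apply integral_mono_ae (((hint W j).const_mul 2).sub (hint B j)) hintRHS
      filter_upwards [hsupp] with u hu
      exact P1 β hβ (hu W) (hu B) (hu j)
    have hint2 : Integrable (fun u : C → ℝ => 2 * sigma β (u W - u j)) μ :=
      (hint W j).const_mul 2
    rw [integral_sub hint2 (hint B j), integral_const_mul, hRHS] at hI
    exact hI
  -- the pair term
  have hpair : 2 * (∫ u, sigma β (u W - u B) ∂μ) - (∫ u, sigma β (u B - u W) ∂μ)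
      ≤ 3 * (1/2 + β/2 * a - g1 * b) - 1 := by
    have hflip : ∫ u, sigma β (u B - u W) ∂μ = 1 - ∫ u, sigma β (u W - u B) ∂μ := by
      have e : (fun u : C → ℝ => sigma β (u B - u W))
          = fun u : C → ℝ => 1 - sigma β (u W - u B) := by
        funext u
        rw [show u B - u W = -(u W - u B) by ring, sigma_neg]
      rw [e, integral_sub (integrable_const _) (hint W B), integral_const]
      simp [measure_univ]
    have hIB : ∫ u, sigma β (u W - u B) ∂μ ≤ 1/2 + β/2 * a - g1 * b := by
      rw [← hRHS]
      apply integral_mono_ae (hint W B) hintRHS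
      filter_upwards [hsupp] with u hu
      exact P2 β hβ (hu W) (hu B)
    linarith
  -- sum bookkeeping
  set I : C → ℝ := fun j => ∫ u, sigma β (u W - u j) ∂μ with hI
  set J : C → ℝ := fun j => ∫ u, sigma β (u B - u j) ∂μ with hJ
  have hBmem : B ∈ Finset.univ.erase W := Finset.mem_erase.2 ⟨hWB.symm, Finset.mem_univ B⟩
  have hWmem : W ∈ Finset.univ.erase B := Finset.mem_erase.2 ⟨hWB, Finset.mem_univ W⟩
  set M : Finset C := (Finset.univ.erase W).erase B with hM
  have hMeq : (Finset.univ.erase B).erase W = M := by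
    ext x
    simp only [hM, Finset.mem_erase, Finset.mem_univ, and_true]
    tauto
  have eI : ∑ j ∈ M, I j + I B = ∑ j ∈ Finset.univ.erase W, I j :=
    Finset.sum_erase_add _ _ hBmem
  have eJ : ∑ j ∈ M, J j + J W = ∑ j ∈ Finset.univ.erase B, J j := by
    rw [← hMeq]
    exact Finset.sum_erase_add _ _ hWmem
  have hcardM : (M.card : ℝ) = (m : ℝ) - 2 := by
    have h1 : M.card = Fintype.card C - 1 - 1 := by
      rw [hM, Finset.card_erase_of_mem hBmem, Finset.card_erase_of_mem (Finset.mem_univ W),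
        Finset.card_univ]
    have h2 : M.card = m - 2 := by omega
    rw [h2, Nat.cast_sub hm2]
    norm_num
  have hsumM : ∑ j ∈ M, (2 * I j - J j) ≤ (M.card : ℝ) * (1/2 + β/2 * a - g1 * b) := by
    have := Finset.sum_le_card_nsmul M (fun j => 2 * I j - J j) (1/2 + β/2 * a - g1 * b)
      (fun j _ => hmid j)
    simpa [nsmul_eq_mul] using this
  have esub : ∑ j ∈ M, (2 * I j - J j) = 2 * (∑ j ∈ M, I j) - ∑ j ∈ M, J j := by
    rw [Finset.sum_sub_distrib, Finset.mul_sum]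
  -- combine the hypotheses
  have hcomb : ((m : ℝ) - 1)/2 ≤ ∑ j ∈ M, (2 * I j - J j) + (2 * I B - J W) := by
    have hh1 : ∑ j ∈ Finset.univ.erase W, I j ≥ ∑ j ∈ Finset.univ.erase B, J j := h1
    have hh2 : ∑ j ∈ Finset.univ.erase W, I j ≥ ((m : ℝ) - 1)/2 := h2
    rw [esub]
    linarith
  rw [hcardM] at hsumM
  have hT : 0 ≤ β/2 * a - g1 * b := by
    have hprod : 0 ≤ ((m : ℝ) + 1) * (β/2 * a - g1 * b) := by nlinarith
    have hm1 : (0:ℝ) < (m : ℝ) + 1 := by positivity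
    by_contra hc
    push_neg at hc
    exact absurd hprod (not_le.2 (mul_neg_of_pos_of_neg hm1 hc))
  have hkey : g1 * b ≤ β/2 * a := by linarith
  rw [hg1val] at hkey
  have h1E : 0 < 1 - Real.exp (-β) := by linarith
  have h2E : 0 < 1 + Real.exp (-β) := by linarith
  rw [show β * ((1 + Real.exp (-β)) / (1 - Real.exp (-β))) * a
      = (β * (1 + Real.exp (-β)) * a) / (1 - Real.exp (-β)) by ring,
    le_div_iff₀ h1E]
  have h3 := mul_le_mul_of_nonneg_left hkey
    (le_of_lt (show (0:ℝ) < 2 * (1 + Real.exp (-β)) by positivity))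
  calc b * (1 - Real.exp (-β))
      = 2 * (1 + Real.exp (-β))
        * ((1 - Real.exp (-β)) / (2 * (1 + Real.exp (-β))) * b) := by
        field_simp
      _ ≤ 2 * (1 + Real.exp (-β)) * (β/2 * a) := h3
      _ = β * (1 + Real.exp (-β)) * a := by ring
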